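/- Let R : [0,a]² → ℝ be a continuous symmetric nonnegative-definite kernel. Suppose the two-point condition R(t,0) + R(t,a) ≥ (R(0,0) + 2R(0,a) + R(a,a))/2 > 0 holds for all t ∈ [0,a]. Then the probability measure μ = ½δ₀ + ½δ_a minimizes the energy ∫∫ R(s,t) μ(ds)μ(dt) over all Borel probability measures on [0,a], and the minimal energy equals (R(0,0) + 2R(0,a) + R(a,a))/4. -/

import Mathlib

open MeasureTheory
open scoped ENNReal

noncomputable def pts (n : ℕ) (a : ℝ) (k : Fin (n+1)) : ℝ := (k : ℕ) * (a / n)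

noncomputable def idx (n : ℕ) (a : ℝ) (s : ℝ) : Fin (n+1) :=
  ⟨min (⌈s / (a / n)⌉.toNat) n, by omega⟩

lemma measurable_idx (n : ℕ) (a : ℝ) : Measurable (idx n a) := by
  have h1 : Measurable fun s : ℝ => ⌈s / (a / n)⌉ :=
    Int.measurable_ceil.comp (measurable_id.div_const _)
  exact (Measurable.of_discrete (f := fun z : ℤ => (⟨min z.toNat n, by omega⟩ : Fin (n+1)))).comp h1

lemma pts_mem {n : ℕ} {a : ℝ} (hn : 0 < n) (ha : 0 < a) (k : Fin (n+1)) :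
    pts n a k ∈ Set.Icc 0 a := by
  have hnR : (0 : ℝ) < n := by exact_mod_cast hn
  have hk : ((k : ℕ) : ℝ) ≤ n := by exact_mod_cast Nat.lt_succ_iff.mp k.isLt
  have hdn : 0 < a / n := div_pos ha hnR
  constructor
  · unfold pts; positivity
  · calc ((k : ℕ) : ℝ) * (a / n) ≤ n * (a / n) := mul_le_mul_of_nonneg_right hk hdn.le
      _ = a := by field_simp

lemma idx_close {n : ℕ} {a : ℝ} (hn : 0 < n) (ha : 0 < a) {s : ℝ}
    (hs : s ∈ Set.Icc 0 a) : s ≤ pts n a (idx n a s) ∧ pts n a (idx n a s) ≤ s + a / n := by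
  have hnR : (0 : ℝ) < n := by exact_mod_cast hn
  have hdn : 0 < a / n := div_pos ha hnR
  obtain ⟨hs0, hsa⟩ := hs
  set q : ℝ := s / (a / n) with hq
  have hq0 : 0 ≤ q := div_nonneg hs0 hdn.le
  have hqn : q ≤ n := by
    rw [hq, div_le_iff₀ hdn]
    calc s ≤ a := hsa
      _ = n * (a / n) := by field_simp
  have hc0 : 0 ≤ ⌈q⌉ := by positivity
  have hcn : ⌈q⌉ ≤ (n : ℤ) := Int.ceil_le.mpr (by exact_mod_cast hqn)
  have htn : ⌈q⌉.toNat ≤ n := by omega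
  have hidx : ((idx n a s : Fin (n+1)) : ℕ) = ⌈q⌉.toNat := by
    simp [idx, ← hq, htn]
  have hcast : ((⌈q⌉.toNat : ℕ) : ℝ) = ((⌈q⌉ : ℤ) : ℝ) := by
    exact_mod_cast congrArg (fun z : ℤ => (z : ℝ)) (Int.toNat_of_nonneg hc0)
  have hpts : pts n a (idx n a s) = ((⌈q⌉ : ℤ) : ℝ) * (a / n) := by
    rw [pts, hidx, hcast]
  constructor
  · rw [hpts]
    have : q ≤ ((⌈q⌉ : ℤ) : ℝ) := Int.le_ceil q
    calc s = q * (a / n) := by rw [hq]; field_simp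
      _ ≤ ((⌈q⌉ : ℤ) : ℝ) * (a / n) := mul_le_mul_of_nonneg_right this hdn.le
  · rw [hpts]
    have h1 : ((⌈q⌉ : ℤ) : ℝ) < q + 1 := Int.ceil_lt_add_one q
    calc ((⌈q⌉ : ℤ) : ℝ) * (a / n) ≤ (q + 1) * (a / n) :=
        mul_le_mul_of_nonneg_right h1.le hdn.le
      _ = s + a / n := by rw [hq]; field_simp

lemma sumrep (n : ℕ) (a : ℝ) (f : Fin (n+1) → ℝ) (s : ℝ) :
    f (idx n a s) = ∑ k, (idx n a ⁻¹' {k}).indicator (fun _ => f k) s := by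
  rw [Finset.sum_eq_single (idx n a s)]
  · rw [Set.indicator_of_mem (by simp [Set.mem_preimage])]
  · intro b _ hb
    rw [Set.indicator_of_notMem]
    simp only [Set.mem_preimage, Set.mem_singleton_iff]
    exact fun h => hb h.symm
  · simp

lemma intrep (n : ℕ) (a : ℝ) (ν : Measure ℝ) [IsProbabilityMeasure ν]
    (f : Fin (n+1) → ℝ) :
    ∫ s, f (idx n a s) ∂ν = ∑ k, (ν (idx n a ⁻¹' {k})).toReal * f k := by
  have : (fun s => f (idx n a s)) = fun s => ∑ k, (idx n a ⁻¹' {k}).indicator (fun _ => f k) s :=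
    funext (sumrep n a f)
  rw [this, integral_finset_sum]
  · refine Finset.sum_congr rfl fun k _ => ?_
    rw [integral_indicator_const (f k) ((measurable_idx n a) (measurableSet_singleton k))]
    simp [mul_comm, measureReal_def]
  · intro k _
    exact (integrable_const (f k)).indicator ((measurable_idx n a) (measurableSet_singleton k))

lemma psum_one (n : ℕ) (a : ℝ) (ν : Measure ℝ) [IsProbabilityMeasure ν] :
    ∑ k, (ν (idx n a ⁻¹' {k})).toReal = 1 := by
  have h := intrep n a ν (fun _ => (1 : ℝ))
  simpa using h.symm


lemma disc_bound (a : ℝ) (ha : 0 ≤ a) (R : ℝ → ℝ → ℝ)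
    (hsymm : ∀ s t, R s t = R t s)
    (hpd : ∀ (n : ℕ) (t : Fin n → ℝ) (c : Fin n → ℝ), (∀ i, t i ∈ Set.Icc 0 a) →
      0 ≤ ∑ i, ∑ j, c i * c j * R (t i) (t j))
    (h2 : ∀ t ∈ Set.Icc 0 a, (R 0 0 + 2 * R 0 a + R a a)/2 ≤ R t 0 + R t a)
    {m : ℕ} (t p : Fin m → ℝ) (ht : ∀ i, t i ∈ Set.Icc 0 a)
    (hp : ∀ i, 0 ≤ p i) (hsum : ∑ i, p i = 1) :
    (R 0 0 + 2 * R 0 a + R a a)/4 ≤ ∑ i, ∑ j, p i * p j * R (t i) (t j) := by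
  have ht' : ∀ i, (Fin.snoc (Fin.snoc t 0) a : Fin (m+2) → ℝ) i ∈ Set.Icc 0 a := by
    intro i
    refine Fin.lastCases ?_ (fun j => ?_) i
    · simp [Set.mem_Icc, ha]
    · refine Fin.lastCases ?_ (fun k => ?_) j
      · simp [Set.mem_Icc, ha]
      · simpa using ht k
  have H := hpd (m + 2) (Fin.snoc (Fin.snoc t 0) a)
    (Fin.snoc (Fin.snoc p (-(1/2))) (-(1/2))) ht'
  have Hexp : ∑ i, ∑ j, (Fin.snoc (Fin.snoc p (-(1/2))) (-(1/2)) : Fin (m+2) → ℝ) i *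
      (Fin.snoc (Fin.snoc p (-(1/2))) (-(1/2)) : Fin (m+2) → ℝ) j *
      R ((Fin.snoc (Fin.snoc t 0) a : Fin (m+2) → ℝ) i)
        ((Fin.snoc (Fin.snoc t 0) a : Fin (m+2) → ℝ) j)
      = (∑ i, ∑ j, p i * p j * R (t i) (t j))
        - (∑ i, p i * (R (t i) 0 + R (t i) a))
        + (R 0 0 + 2 * R 0 a + R a a)/4 - (1/2) * ∑ i, p i * (R 0 (t i) - R (t i) 0)
        - (1/2) * ∑ i, p i * (R a (t i) - R (t i) a) + (R a 0 - R 0 a)/4 := by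
    simp only [Fin.sum_univ_castSucc, Fin.snoc_castSucc, Fin.snoc_last, Finset.sum_add_distrib,
      Finset.sum_sub_distrib, Finset.mul_sum]
    ring_nf
    have E1 : ∑ x : Fin m, (-1 / 2 * p x * R 0 (t x)) + ∑ x : Fin m, (-1 / 2 * p x * R a (t x))
        + ∑ x : Fin m, (p x * (-1 / 2) * R (t x) 0) + ∑ x : Fin m, (p x * (-1 / 2) * R (t x) a)
        + ∑ x : Fin m, p x * (R (t x) 0 + R (t x) a)
        + ∑ x : Fin m, 1 / 2 * p x * (R 0 (t x) - R (t x) 0)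
        + ∑ x : Fin m, 1 / 2 * p x * (R a (t x) - R (t x) a) = 0 := by
      rw [← Finset.sum_add_distrib, ← Finset.sum_add_distrib, ← Finset.sum_add_distrib,
        ← Finset.sum_add_distrib, ← Finset.sum_add_distrib, ← Finset.sum_add_distrib]
      exact Finset.sum_eq_zero fun i _ => by ring
    simp only [Finset.sum_add_distrib, Finset.sum_sub_distrib, mul_add, mul_sub, ← Finset.sum_mul, ← Finset.mul_sum] at E1 ⊢
    linarith [E1]
  rw [Hexp] at H
  have z1 : ∑ i, p i * (R 0 (t i) - R (t i) 0) = 0 :=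
    Finset.sum_eq_zero fun i _ => by rw [hsymm 0 (t i)]; ring
  have z2 : ∑ i, p i * (R a (t i) - R (t i) a) = 0 :=
    Finset.sum_eq_zero fun i _ => by rw [hsymm a (t i)]; ring
  have z3 : R a 0 = R 0 a := hsymm a 0
  have hL : (R 0 0 + 2 * R 0 a + R a a)/2 ≤ ∑ i, p i * (R (t i) 0 + R (t i) a) := by
    calc (R 0 0 + 2 * R 0 a + R a a)/2
        = ∑ i, p i * ((R 0 0 + 2 * R 0 a + R a a)/2) := by
          rw [← Finset.sum_mul, hsum, one_mul]
      _ ≤ ∑ i, p i * (R (t i) 0 + R (t i) a) :=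
          Finset.sum_le_sum (fun i _ => mul_le_mul_of_nonneg_left (h2 (t i) (ht i)) (hp i))
  rw [z1, z2, z3] at H
  linarith

lemma integral_two_dirac (x y : ℝ) (f : ℝ → ℝ) (hf : Continuous f) :
    ∫ t, f t ∂((1/2 : ℝ≥0∞) • Measure.dirac x + (1/2 : ℝ≥0∞) • Measure.dirac y)
      = (f x + f y)/2 := by
  have hd : ∀ z : ℝ, Integrable f (Measure.dirac z) := by
    intro z
    refine ⟨hf.aestronglyMeasurable, ?_⟩
    simp [HasFiniteIntegral, lintegral_dirac]
  rw [integral_add_measure ((hd x).smul_measure (by norm_num))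
    ((hd y).smul_measure (by norm_num))]
  rw [integral_smul_measure, integral_smul_measure, integral_dirac, integral_dirac]
  norm_num
  ring

lemma energy_lb (a : ℝ) (ha : 0 < a) (R : ℝ → ℝ → ℝ)
    (hc : Continuous fun p : ℝ × ℝ => R p.1 p.2)
    (hsymm : ∀ s t, R s t = R t s)
    (hpd : ∀ (n : ℕ) (t : Fin n → ℝ) (c : Fin n → ℝ), (∀ i, t i ∈ Set.Icc 0 a) →
      0 ≤ ∑ i, ∑ j, c i * c j * R (t i) (t j))
    (h2 : ∀ t ∈ Set.Icc 0 a, (R 0 0 + 2 * R 0 a + R a a)/2 ≤ R t 0 + R t a)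
    (ν : Measure ℝ) (hprob : IsProbabilityMeasure ν) (hsupp : ν (Set.Icc 0 a)ᶜ = 0) :
    (R 0 0 + 2 * R 0 a + R a a)/4 ≤ ∫ s, ∫ t, R s t ∂ν ∂ν := by
  set K : Set ℝ := Set.Icc 0 a with hK
  have hae : ∀ᵐ s ∂ν, s ∈ K := by
    rw [ae_iff]
    exact hsupp
  obtain ⟨M, hM⟩ := (isCompact_Icc.prod isCompact_Icc).exists_bound_of_continuousOn
    hc.continuousOn
  have hMK : ∀ s ∈ K, ∀ t ∈ K, |R s t| ≤ M := by
    intro s hs t ht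
    simpa [Real.norm_eq_abs] using hM (s, t) (Set.mk_mem_prod hs ht)
  have huc : UniformContinuousOn (fun p : ℝ × ℝ => R p.1 p.2) (Set.Icc 0 a ×ˢ Set.Icc 0 a) :=
    (isCompact_Icc.prod isCompact_Icc).uniformContinuousOn_of_continuous hc.continuousOn
  rw [Metric.uniformContinuousOn_iff] at huc
  refine le_of_forall_pos_le_add fun ε hε => ?_
  obtain ⟨δ, hδ0, hδ⟩ := huc ε hε
  obtain ⟨n, hn⟩ := exists_nat_gt (a / δ)
  have hnR : (0 : ℝ) < n := lt_of_le_of_lt (div_nonneg ha.le hδ0.le) hn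
  have hn0 : 0 < n := by exact_mod_cast hnR
  have hstep : a / n < δ := by
    rw [div_lt_iff₀ hnR]
    calc a = (a / δ) * δ := by field_simp
      _ < n * δ := mul_lt_mul_of_pos_right hn hδ0
      _ = δ * n := by ring
  -- the projection
  set π : ℝ → ℝ := fun s => pts n a (idx n a s) with hπ
  have hπK : ∀ s, π s ∈ K := fun s => pts_mem hn0 ha _
  have hπclose : ∀ s ∈ K, dist s (π s) < δ := by
    intro s hs
    obtain ⟨h1, h2'⟩ := idx_close hn0 ha hs
    rw [Real.dist_eq, abs_sub_lt_iff]
    constructor <;> linarith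
  have hclose : ∀ s ∈ K, ∀ t ∈ K, |R s t - R (π s) (π t)| ≤ ε := by
    intro s hs t ht
    have := hδ (s, t) (Set.mk_mem_prod hs ht) (π s, π t)
      (Set.mk_mem_prod (hπK s) (hπK t)) (by
        rw [Prod.dist_eq]
        exact max_lt (hπclose s hs) (hπclose t ht))
    rw [Real.dist_eq] at this
    exact this.le
  have measπ : Measurable π :=
    (Measurable.of_discrete (f := pts n a)).comp (measurable_idx n a)
  -- integrability facts
  have contRs : ∀ s : ℝ, Continuous fun t => R s t := fun s =>
    hc.comp (continuous_const.prodMk continuous_id)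
  have intR : ∀ s : ℝ, Integrable (fun t => R s t) ν := by
    intro s
    by_cases hsK : s ∈ K
    · refine Integrable.mono' (integrable_const M) (contRs s).aestronglyMeasurable ?_
      filter_upwards [hae] with t ht
      simpa [Real.norm_eq_abs] using hMK s hsK t ht
    · obtain ⟨Ms, hMs⟩ := (isCompact_singleton (x := s)).prod isCompact_Icc
        |>.exists_bound_of_continuousOn hc.continuousOn
      refine Integrable.mono' (integrable_const Ms) (contRs s).aestronglyMeasurable ?_
      filter_upwards [hae] with t ht
      exact hMs (s, t) (Set.mk_mem_prod rfl ht)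
  have measD2 : Measurable fun p : ℝ × ℝ => R (π p.1) (π p.2) :=
    hc.measurable.comp ((measπ.comp measurable_fst).prodMk (measπ.comp measurable_snd))
  have intD : ∀ s : ℝ, Integrable (fun t => R (π s) (π t)) ν := by
    intro s
    refine Integrable.mono' (integrable_const M)
      ((measD2.comp (measurable_const.prodMk measurable_id)).aestronglyMeasurable) ?_
    filter_upwards [] with t
    simpa [Real.norm_eq_abs] using hMK _ (hπK s) _ (hπK t)
  set F : ℝ → ℝ := fun s => ∫ t, R s t ∂ν with hF
  set D : ℝ → ℝ := fun s => ∫ t, R (π s) (π t) ∂ν with hD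
  have smF : StronglyMeasurable F := hc.stronglyMeasurable.integral_prod_right'
  have smD : StronglyMeasurable D := measD2.stronglyMeasurable.integral_prod_right'
  have intF : Integrable F ν := by
    refine Integrable.mono' (integrable_const M) smF.aestronglyMeasurable ?_
    filter_upwards [hae] with s hs
    calc ‖F s‖ ≤ M * (ν Set.univ).toReal := by
          refine norm_integral_le_of_norm_le_const ?_
          filter_upwards [hae] with t ht
          simpa [Real.norm_eq_abs] using hMK s hs t ht
      _ = M := by simp
  have intDF : Integrable D ν := by
    refine Integrable.mono' (integrable_const M) smD.aestronglyMeasurable ?_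
    filter_upwards [] with s
    calc ‖D s‖ ≤ M * (ν Set.univ).toReal := by
          refine norm_integral_le_of_norm_le_const ?_
          filter_upwards [] with t
          simpa [Real.norm_eq_abs] using hMK _ (hπK s) _ (hπK t)
      _ = M := by simp
  -- step 1 : |∫F - ∫D| ≤ ε
  have step1 : |∫ s, F s ∂ν - ∫ s, D s ∂ν| ≤ ε := by
    rw [← integral_sub intF intDF]
    calc |∫ s, (F s - D s) ∂ν| ≤ ε * (ν Set.univ).toReal := by
          rw [← Real.norm_eq_abs]
          refine norm_integral_le_of_norm_le_const ?_
          filter_upwards [hae] with s hs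
          rw [hF, hD, Real.norm_eq_abs, ← integral_sub (intR s) (intD s)]
          calc |∫ t, (R s t - R (π s) (π t)) ∂ν| ≤ ε * (ν Set.univ).toReal := by
                rw [← Real.norm_eq_abs]
                refine norm_integral_le_of_norm_le_const ?_
                filter_upwards [hae] with t ht
                simpa [Real.norm_eq_abs] using hclose s hs t ht
            _ = ε := by simp
      _ = ε := by simp
  -- step 2 : ∫ D = discrete sum
  set p : Fin (n+1) → ℝ := fun k => (ν (idx n a ⁻¹' {k})).toReal with hp
  have step2 : ∫ s, D s ∂ν = ∑ k, ∑ l, p k * p l * R (pts n a k) (pts n a l) := by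
    have inner : ∀ k, (∫ t, R (pts n a k) (π t) ∂ν) = ∑ l, p l * R (pts n a k) (pts n a l) := by
      intro k
      exact intrep n a ν (fun l => R (pts n a k) (pts n a l))
    have : ∫ s, D s ∂ν = ∑ k, p k * ∫ t, R (pts n a k) (π t) ∂ν := by
      exact intrep n a ν (fun k => ∫ t, R (pts n a k) (π t) ∂ν)
    rw [this]
    refine Finset.sum_congr rfl fun k _ => ?_
    rw [inner k, Finset.mul_sum]
    exact Finset.sum_congr rfl fun l _ => by ring
  -- step 3 : discrete bound
  have step3 : (R 0 0 + 2 * R 0 a + R a a)/4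
      ≤ ∑ k, ∑ l, p k * p l * R (pts n a k) (pts n a l) := by
    refine disc_bound a ha.le R hsymm hpd h2 (pts n a) p (fun k => pts_mem hn0 ha k)
      (fun k => ENNReal.toReal_nonneg) ?_
    exact psum_one n a ν
  have habs := abs_le.mp step1
  rw [step2] at *
  linarith [habs.1, habs.2, step3]

theorem stmt6 (a : ℝ) (ha : 0 < a) (R : ℝ → ℝ → ℝ)
    (hc : Continuous fun p : ℝ × ℝ => R p.1 p.2)
    (hsymm : ∀ s t, R s t = R t s)
    (hpd : ∀ (n : ℕ) (t : Fin n → ℝ) (c : Fin n → ℝ), (∀ i, t i ∈ Set.Icc 0 a) →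
      0 ≤ ∑ i, ∑ j, c i * c j * R (t i) (t j))
    (h2 : ∀ t ∈ Set.Icc 0 a, (R 0 0 + 2 * R 0 a + R a a)/2 ≤ R t 0 + R t a)
    (hpos : 0 < (R 0 0 + 2 * R 0 a + R a a)/2) :
    let μ : Measure ℝ := (1/2 : ℝ≥0∞) • Measure.dirac 0 + (1/2 : ℝ≥0∞) • Measure.dirac a
    (∫ s, ∫ t, R s t ∂μ ∂μ) = (R 0 0 + 2 * R 0 a + R a a)/4 ∧
    ∀ ν : Measure ℝ, IsProbabilityMeasure ν → ν (Set.Icc 0 a)ᶜ = 0 →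
      (R 0 0 + 2 * R 0 a + R a a)/4 ≤ ∫ s, ∫ t, R s t ∂ν ∂ν := by
  intro μ
  constructor
  · have innerEq : (fun s => ∫ t, R s t ∂μ) = fun s => (R s 0 + R s a)/2 :=
      funext fun s => integral_two_dirac 0 a (fun t => R s t)
        (hc.comp (continuous_const.prodMk continuous_id))
    show (∫ s, ∫ t, R s t ∂μ ∂μ) = (R 0 0 + 2 * R 0 a + R a a)/4
    rw [innerEq, integral_two_dirac 0 a (fun s => (R s 0 + R s a)/2)
      (((hc.comp (continuous_id.prodMk continuous_const)).add
        (hc.comp (continuous_id.prodMk continuous_const))).div_const 2)]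
    rw [hsymm a 0]
    ring
  · intro ν hν hνs
    exact energy_lb a ha R hc hsymm hpd h2 ν hν hνs
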